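/- arXiv:1209.0835 — 3 statements merged into one kernel-verified Lean document; each statement's English description precedes it below -/
import Mathlib

section
/- Let T be a nonempty finite set, let I ∈ {0,1}, and let F : T → ℝ satisfy 0 ≤ F(t) ≤ 2^I for every t ∈ T. Let ε > 0 and ν ≥ 1 be real numbers, and let K = ⌈ln(2ν)/(2ε²)⌉. Let t₁, …, t_K be independent random variables, each uniformly distributed on T, and set C = 2^{−I}·E[F(t₁)] and C̃ = (1/(2^I·K))·∑_{i=1}^{K} F(t_i). Then P(|C̃ − C| ≤ ε) ≥ 1 − 1/ν. -/
open MeasureTheory ProbabilityTheory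


lemma key_ineq (p : ℝ) (hp0 : 0 ≤ p) (hp1 : p ≤ 1) (s : ℝ) :
    1 - p + p * Real.exp s ≤ Real.exp (s * p + s ^ 2 / 8) := by
  set u : ℝ → ℝ := fun x => 1 - p + p * Real.exp x with hu_def
  have hu : ∀ x, 0 < u x := by
    intro x
    rcases eq_or_lt_of_le hp0 with h | h
    · simp [hu_def, ← h]
    · have := Real.exp_pos x
      simp only [hu_def]
      nlinarith
  set G : ℝ → ℝ := fun x => x * p + x ^ 2 / 8 - Real.log (u x) with hG_def
  set G' : ℝ → ℝ := fun x => p + x / 4 - p * Real.exp x / u x with hG'_def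
  have hu' : ∀ x, HasDerivAt u (p * Real.exp x) x := by
    intro x
    exact ((Real.hasDerivAt_exp x).const_mul p).const_add (1 - p)
  have hG' : ∀ x, HasDerivAt G (G' x) x := by
    intro x
    have h1 : HasDerivAt (fun x : ℝ => x * p) p x := (hasDerivAt_id x).mul_const p |>.congr_deriv (by ring)
    have h2 : HasDerivAt (fun x : ℝ => x ^ 2 / 8) (x / 4) x := by
      have := (hasDerivAt_pow 2 x).div_const 8
      convert this using 1; rfl; rfl; norm_num; ring
    have h3 : HasDerivAt (fun x => Real.log (u x)) (p * Real.exp x / u x) x :=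
      (hu' x).log (hu x).ne'
    exact (h1.add h2).sub h3
  have hG'' : ∀ x, HasDerivAt G' (1 / 4 - (1 - p) * (p * Real.exp x) / (u x) ^ 2) x := by
    intro x
    have h2 : HasDerivAt (fun x : ℝ => p + x / 4) (1 / 4) x := by
      simpa using ((hasDerivAt_id x).div_const 4).const_add p
    have h3 : HasDerivAt (fun x => p * Real.exp x / u x)
        ((p * Real.exp x * u x - p * Real.exp x * (p * Real.exp x)) / (u x) ^ 2) x :=
      ((Real.hasDerivAt_exp x).const_mul p).div (hu' x) (hu x).ne'
    have := h2.sub h3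
    convert this using 1; rfl; rfl; rfl
    have : p * Real.exp x * u x - p * Real.exp x * (p * Real.exp x)
        = (1 - p) * (p * Real.exp x) := by simp only [hu_def]; ring
    rw [this]
  have hG''nonneg : ∀ x, 0 ≤ 1 / 4 - (1 - p) * (p * Real.exp x) / (u x) ^ 2 := by
    intro x
    rw [sub_nonneg, div_le_iff₀ (pow_pos (hu x) 2)]
    have : u x = 1 - p + p * Real.exp x := rfl
    nlinarith [sq_nonneg ((1 - p) - p * Real.exp x)]
  have hG'mono : Monotone G' :=
    monotone_of_hasDerivAt_nonneg hG'' (fun x => hG''nonneg x)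
  have hG'0 : G' 0 = 0 := by
    have : u 0 = 1 := by simp [hu_def]
    simp [hG'_def, this]
  have hG0 : G 0 = 0 := by
    have : u 0 = 1 := by simp [hu_def]
    simp [hG_def, this]
  have hGcont : Continuous G := by
    have : Differentiable ℝ G := fun x => (hG' x).differentiableAt
    exact this.continuous
  have hGnonneg : ∀ x, 0 ≤ G x := by
    intro x
    rcases le_total 0 x with hx | hx
    · have hmono : MonotoneOn G (Set.Ici 0) := by
        apply monotoneOn_of_hasDerivWithinAt_nonneg (convex_Ici 0) hGcont.continuousOn
          (f' := G') (fun y hy => (hG' y).hasDerivWithinAt)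
        intro y hy
        rw [interior_Ici] at hy
        have : G' 0 ≤ G' y := hG'mono (le_of_lt hy)
        linarith [hG'0 ▸ this]
      have := hmono (Set.self_mem_Ici) (Set.mem_Ici.2 hx) hx
      linarith [hG0 ▸ this]
    · have hmono : AntitoneOn G (Set.Iic 0) := by
        apply antitoneOn_of_hasDerivWithinAt_nonpos (convex_Iic 0) hGcont.continuousOn
          (f' := G') (fun y hy => (hG' y).hasDerivWithinAt)
        intro y hy
        rw [interior_Iic] at hy
        have : G' y ≤ G' 0 := hG'mono (le_of_lt hy)
        linarith [hG'0 ▸ this]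
      have := hmono (Set.mem_Iic.2 hx) (Set.self_mem_Iic) hx
      linarith [hG0 ▸ this]
  have hlog : Real.log (u s) ≤ s * p + s ^ 2 / 8 := by
    have := hGnonneg s
    simp only [hG_def] at this
    linarith
  exact (Real.log_le_iff_le_exp (hu s)).mp hlog


lemma mgf_le_of_mem_Icc {Ω : Type*} [MeasurableSpace Ω] {P : Measure Ω}
    [IsProbabilityMeasure P] {X : Ω → ℝ} (hm : Measurable X)
    (h01 : ∀ ω, X ω ∈ Set.Icc (0 : ℝ) 1) (s : ℝ) :
    mgf (fun ω => X ω - ∫ ω, X ω ∂P) P s ≤ Real.exp (s ^ 2 / 8) := by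
  have hXint : Integrable X P := by
    refine (integrable_const (1 : ℝ)).mono' hm.aestronglyMeasurable ?_
    exact ae_of_all _ fun ω => by
      have := h01 ω; rw [Real.norm_eq_abs, abs_le]; constructor <;> [linarith [this.1]; exact this.2]
  set p : ℝ := ∫ ω, X ω ∂P with hp_def
  have hp0 : 0 ≤ p := integral_nonneg fun ω => (h01 ω).1
  have hp1 : p ≤ 1 := by
    calc p ≤ ∫ _ω, (1 : ℝ) ∂P := integral_mono hXint (integrable_const 1) fun ω => (h01 ω).2
    _ = 1 := by simp
  have hexpint : Integrable (fun ω => Real.exp (s * X ω)) P := by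
    refine (integrable_const (Real.exp |s|)).mono'
      ((hm.const_mul s).exp).aestronglyMeasurable ?_
    refine ae_of_all _ fun ω => ?_
    rw [Real.norm_eq_abs, abs_of_pos (Real.exp_pos _), Real.exp_le_exp]
    have h := h01 ω
    calc s * X ω ≤ |s * X ω| := le_abs_self _
    _ = |s| * |X ω| := abs_mul s (X ω)
    _ ≤ |s| * 1 := by
        apply mul_le_mul_of_nonneg_left _ (abs_nonneg s)
        rw [abs_le]; constructor <;> [linarith [h.1]; exact h.2]
    _ = |s| := mul_one _
  have hpoint : ∀ ω, Real.exp (s * X ω) ≤ 1 - X ω + X ω * Real.exp s := by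
    intro ω
    have h := h01 ω
    have hc := convexOn_exp.2 (Set.mem_univ (0 : ℝ)) (Set.mem_univ s)
      (by linarith [h.2] : (0:ℝ) ≤ 1 - X ω) h.1 (by ring)
    simp only [smul_eq_mul, mul_zero, zero_add, Real.exp_zero, mul_one] at hc
    calc Real.exp (s * X ω) = Real.exp (X ω * s) := by rw [mul_comm]
    _ ≤ (1 - X ω) * 1 + X ω * Real.exp s := by simpa using hc
    _ = 1 - X ω + X ω * Real.exp s := by ring
  have hint_rhs : Integrable (fun ω => 1 - X ω + X ω * Real.exp s) P :=
    ((integrable_const (1:ℝ)).sub hXint).add (hXint.mul_const _)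
  have hintle : ∫ ω, Real.exp (s * X ω) ∂P ≤ 1 - p + p * Real.exp s := by
    calc ∫ ω, Real.exp (s * X ω) ∂P ≤ ∫ ω, (1 - X ω + X ω * Real.exp s) ∂P :=
      integral_mono hexpint hint_rhs hpoint
    _ = 1 - p + p * Real.exp s := by
        have heq : ∀ ω, 1 - X ω + X ω * Real.exp s = 1 + (Real.exp s - 1) * X ω := by
          intro ω; ring
        simp_rw [heq]
        rw [integral_add (integrable_const (1:ℝ)) (hXint.const_mul _),
          integral_const_mul, integral_const]
        simp only [measure_univ, ENNReal.toReal_one, probReal_univ, smul_eq_mul, one_mul, mul_one]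
        rw [← hp_def]; ring
  have hmgf : mgf (fun ω => X ω - p) P s = Real.exp (-(s * p)) * ∫ ω, Real.exp (s * X ω) ∂P := by
    rw [mgf]
    have : ∀ ω, Real.exp (s * (X ω - p)) = Real.exp (-(s * p)) * Real.exp (s * X ω) := by
      intro ω; rw [← Real.exp_add]; ring_nf
    simp_rw [this]
    rw [integral_const_mul]
  rw [hmgf]
  calc Real.exp (-(s * p)) * ∫ ω, Real.exp (s * X ω) ∂P
      ≤ Real.exp (-(s * p)) * (1 - p + p * Real.exp s) := by
        apply mul_le_mul_of_nonneg_left hintle (Real.exp_pos _).le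
    _ ≤ Real.exp (-(s * p)) * Real.exp (s * p + s ^ 2 / 8) := by
        apply mul_le_mul_of_nonneg_left (key_ineq p hp0 hp1 s) (Real.exp_pos _).le
    _ = Real.exp (s ^ 2 / 8) := by rw [← Real.exp_add]; ring_nf

/-- Sample-complexity theorem for the constant-time clustering-coefficient
approximation algorithm: with `K = ⌈ln(2ν)/(2ε²)⌉` i.i.d. uniform samples from the
nonempty finite set `T`, and `F : T → ℝ` with values in `[0, 2^I]` (`I ∈ {0,1}`),
the empirical estimator `C̃ = (2^I K)⁻¹ ∑ᵢ F(tᵢ)` approximates `C = 2^{-I} 𝔼[F(t₁)]`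
within `ε` with probability at least `1 - 1/ν`. -/
theorem stmt_1
    {Ω : Type*} [MeasurableSpace Ω] (P : Measure Ω) [IsProbabilityMeasure P]
    {T : Type*} [Fintype T] [Nonempty T] [MeasurableSpace T] [MeasurableSingletonClass T]
    (I : ℕ) (hI : I = 0 ∨ I = 1)
    (F : T → ℝ) (hF : ∀ x : T, 0 ≤ F x ∧ F x ≤ 2 ^ I)
    (ε ν : ℝ) (hε : 0 < ε) (hν : 1 ≤ ν)
    (K : ℕ) (hKdef : K = ⌈Real.log (2 * ν) / (2 * ε ^ 2)⌉₊) (hK : 0 < K)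
    (t : Fin K → Ω → T)
    (hmeas : ∀ i, Measurable (t i))
    (hunif : ∀ i, Measure.map (t i) P = (PMF.uniformOfFintype T).toMeasure)
    (hindep : iIndepFun t P)
    (C : ℝ) (hC : C = ((2 : ℝ) ^ I)⁻¹ * ∫ ω, F (t ⟨0, hK⟩ ω) ∂P)
    (Ctilde : Ω → ℝ)
    (hCt : ∀ ω, Ctilde ω = (1 / ((2 : ℝ) ^ I * (K : ℝ))) * ∑ i : Fin K, F (t i ω)) :
    (P {ω | |Ctilde ω - C| ≤ ε}).toReal ≥ 1 - 1 / ν := by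
  -- normalized sampled function
  set c : ℝ := ((2 : ℝ) ^ I)⁻¹ with hc_def
  have hc_pos : 0 < c := by positivity
  set F' : T → ℝ := fun x => c * F x with hF'_def
  have hF'meas : Measurable F' := measurable_of_countable _
  have hF'01 : ∀ x, F' x ∈ Set.Icc (0 : ℝ) 1 := by
    intro x
    constructor
    · exact mul_nonneg hc_pos.le (hF x).1
    · have h2 : F x ≤ 2 ^ I := (hF x).2
      rw [hF'_def]
      calc c * F x ≤ c * 2 ^ I := by apply mul_le_mul_of_nonneg_left h2 hc_pos.le
      _ = 1 := by rw [hc_def]; field_simp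
  set Y : Fin K → Ω → ℝ := fun i ω => F' (t i ω) with hY_def
  have hYmeas : ∀ i, Measurable (Y i) := fun i => hF'meas.comp (hmeas i)
  have hY01 : ∀ i ω, Y i ω ∈ Set.Icc (0 : ℝ) 1 := fun i ω => hF'01 _
  -- common mean
  set m : ℝ := ∫ x, F' x ∂((PMF.uniformOfFintype T).toMeasure) with hm_def
  have hYint_eq : ∀ i, ∫ ω, Y i ω ∂P = m := by
    intro i
    rw [hY_def, hm_def, ← hunif i,
      integral_map (hmeas i).aemeasurable hF'meas.aestronglyMeasurable]
  -- C equals m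
  have hCm : C = m := by
    rw [hC, ← hYint_eq ⟨0, hK⟩]
    rw [hY_def, hF'_def]
    simp only []
    rw [← integral_const_mul]
  -- centered variables
  set X : Fin K → Ω → ℝ := fun i ω => Y i ω - m with hX_def
  have hXmeas : ∀ i, Measurable (X i) := fun i => (hYmeas i).sub measurable_const
  have hm01 : 0 ≤ m ∧ m ≤ 1 := by
    constructor
    · rw [← hYint_eq ⟨0, hK⟩]; exact integral_nonneg fun ω => (hY01 _ ω).1
    · rw [← hYint_eq ⟨0, hK⟩]
      have hint : Integrable (Y ⟨0, hK⟩) P := by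
        refine (integrable_const (1 : ℝ)).mono' (hYmeas _).aestronglyMeasurable ?_
        exact ae_of_all _ fun ω => by
          have := hY01 ⟨0, hK⟩ ω
          rw [Real.norm_eq_abs, abs_le]; exact ⟨by linarith [this.1], this.2⟩
      calc ∫ ω, Y ⟨0, hK⟩ ω ∂P ≤ ∫ _ω, (1:ℝ) ∂P := integral_mono hint (integrable_const 1)
            fun ω => (hY01 _ ω).2
      _ = 1 := by simp
  have hXbdd : ∀ i ω, |X i ω| ≤ 1 := by
    intro i ω
    have h := hY01 i ω
    rw [hX_def, abs_le]
    constructor <;> simp only [] <;> [linarith [h.1, hm01.2]; linarith [h.2, hm01.1]]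
  -- integrability of exp(r * X i)
  have hXexpint : ∀ (r : ℝ) i, Integrable (fun ω => Real.exp (r * X i ω)) P := by
    intro r i
    refine (integrable_const (Real.exp |r|)).mono'
      (((hXmeas i).const_mul r).exp).aestronglyMeasurable ?_
    refine ae_of_all _ fun ω => ?_
    rw [Real.norm_eq_abs, abs_of_pos (Real.exp_pos _), Real.exp_le_exp]
    calc r * X i ω ≤ |r * X i ω| := le_abs_self _
    _ = |r| * |X i ω| := abs_mul _ _
    _ ≤ |r| * 1 := mul_le_mul_of_nonneg_left (hXbdd i ω) (abs_nonneg r)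
    _ = |r| := mul_one _
  -- independence of X
  have hindepX : iIndepFun X P := by
    have := hindep.comp (fun _ : Fin K => fun x : T => F' x - m)
      (fun _ => (measurable_of_countable _))
    exact this
  -- mgf bound for each X i
  have hmgfX : ∀ (r : ℝ) i, mgf (X i) P r ≤ Real.exp (r ^ 2 / 8) := by
    intro r i
    have := mgf_le_of_mem_Icc (P := P) (hYmeas i) (hY01 i) r
    rwa [hYint_eq i] at this
  -- sum
  set S : Ω → ℝ := fun ω => ∑ i : Fin K, X i ω with hS_def
  have hSsum : S = ∑ i : Fin K, X i := by
    funext ω; rw [hS_def]; simp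
  have hSmeas : Measurable S := Finset.measurable_sum Finset.univ fun i _ => hXmeas i
  have hmgfS : ∀ r : ℝ, mgf S P r ≤ Real.exp (K * (r ^ 2 / 8)) := by
    intro r
    rw [hSsum, hindepX.mgf_sum hXmeas Finset.univ]
    calc ∏ i : Fin K, mgf (X i) P r ≤ ∏ _i : Fin K, Real.exp (r ^ 2 / 8) :=
      Finset.prod_le_prod (fun i _ => mgf_nonneg) (fun i _ => hmgfX r i)
    _ = Real.exp (K * (r ^ 2 / 8)) := by
        rw [Finset.prod_const, ← Real.exp_nat_mul]; simp
  have hSexpint : ∀ r : ℝ, Integrable (fun ω => Real.exp (r * S ω)) P := by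
    intro r
    have := hindepX.integrable_exp_mul_sum hXmeas (s := Finset.univ)
      (fun i _ => hXexpint r i)
    convert this using 2 with ω
    rw [hSsum]
  -- Chernoff bounds
  have hbound : Real.exp (-(4 * ε) * (K * ε) + K * ((4 * ε) ^ 2 / 8)) = Real.exp (-(2 * K * ε ^ 2)) := by
    congr 1; ring
  have hup : (P {ω | (K : ℝ) * ε ≤ S ω}).toReal ≤ Real.exp (-(2 * K * ε ^ 2)) := by
    calc (P {ω | (K : ℝ) * ε ≤ S ω}).toReal
        ≤ Real.exp (-(4 * ε) * ((K : ℝ) * ε)) * mgf S P (4 * ε) :=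
          measure_ge_le_exp_mul_mgf ((K : ℝ) * ε) (by linarith) (hSexpint (4 * ε))
      _ ≤ Real.exp (-(4 * ε) * ((K : ℝ) * ε)) * Real.exp ((K : ℝ) * ((4 * ε) ^ 2 / 8)) :=
          mul_le_mul_of_nonneg_left (hmgfS (4 * ε)) (Real.exp_pos _).le
      _ = Real.exp (-(2 * K * ε ^ 2)) := by rw [← Real.exp_add, ← hbound]
  have hdown : (P {ω | S ω ≤ -((K : ℝ) * ε)}).toReal ≤ Real.exp (-(2 * K * ε ^ 2)) := by
    calc (P {ω | S ω ≤ -((K : ℝ) * ε)}).toReal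
        ≤ Real.exp (-(-(4 * ε)) * (-((K : ℝ) * ε))) * mgf S P (-(4 * ε)) :=
          measure_le_le_exp_mul_mgf (-((K : ℝ) * ε)) (by linarith) (hSexpint (-(4 * ε)))
      _ ≤ Real.exp (-(-(4 * ε)) * (-((K : ℝ) * ε))) * Real.exp ((K : ℝ) * ((-(4 * ε)) ^ 2 / 8)) :=
          mul_le_mul_of_nonneg_left (hmgfS (-(4 * ε))) (Real.exp_pos _).le
      _ = Real.exp (-(2 * K * ε ^ 2)) := by rw [← Real.exp_add]; congr 1; ring
  -- exponential bound from K definition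
  have hKge : Real.log (2 * ν) ≤ 2 * K * ε ^ 2 := by
    have h1 : Real.log (2 * ν) / (2 * ε ^ 2) ≤ (K : ℝ) := by
      rw [hKdef]; exact Nat.le_ceil _
    have h2 : (0:ℝ) < 2 * ε ^ 2 := by positivity
    rw [div_le_iff₀ h2] at h1
    linarith
  have hν0 : (0:ℝ) < ν := by linarith
  have hexp_le : Real.exp (-(2 * K * ε ^ 2)) ≤ 1 / (2 * ν) := by
    rw [Real.exp_neg]
    rw [div_eq_inv_mul, mul_one]
    apply inv_anti₀ (by linarith)
    calc 2 * ν = Real.exp (Real.log (2 * ν)) := (Real.exp_log (by linarith)).symm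
    _ ≤ Real.exp (2 * K * ε ^ 2) := Real.exp_le_exp.2 hKge
  -- relate Ctilde - C to S
  have hCtS : ∀ ω, Ctilde ω - C = ((K : ℝ))⁻¹ * S ω := by
    intro ω
    have hKne : ((K : ℝ)) ≠ 0 := Nat.cast_ne_zero.2 hK.ne'
    rw [hCt ω, hCm, hS_def]
    simp only [hX_def, hY_def, hF'_def]
    rw [Finset.sum_sub_distrib]
    simp only [Finset.sum_const, Finset.card_univ, Fintype.card_fin, nsmul_eq_mul]
    rw [← Finset.mul_sum]
    have h2I : ((2:ℝ) ^ I) ≠ 0 := by positivity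
    rw [hc_def]
    field_simp [hc_def]
  -- event inclusion
  set A : Set Ω := {ω | |Ctilde ω - C| ≤ ε} with hA_def
  have hAmeas : MeasurableSet A := by
    have hCtm : Measurable Ctilde := by
      have : Ctilde = fun ω => (1 / ((2 : ℝ) ^ I * (K : ℝ))) * ∑ i : Fin K, F (t i ω) := by
        funext ω; exact hCt ω
      rw [this]
      exact (Finset.measurable_sum _ fun i _ =>
        (measurable_of_countable F).comp (hmeas i)).const_mul _
    exact measurableSet_le ((hCtm.sub measurable_const).abs) measurable_const
  have hsub : Aᶜ ⊆ {ω | (K : ℝ) * ε ≤ S ω} ∪ {ω | S ω ≤ -((K : ℝ) * ε)} := by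
    intro ω hω
    simp only [hA_def, Set.mem_compl_iff, Set.mem_setOf_eq, not_le] at hω
    have hKpos : (0:ℝ) < (K : ℝ) := Nat.cast_pos.2 hK
    have habs : (K : ℝ) * ε < |S ω| := by
      have := hCtS ω
      rw [this] at hω
      rw [abs_mul, abs_of_pos (inv_pos.2 hKpos)] at hω
      calc (K : ℝ) * ε < (K : ℝ) * (((K:ℝ))⁻¹ * |S ω|) :=
        (mul_lt_mul_iff_right₀ hKpos).2 hω
      _ = |S ω| := by field_simp
    rcases lt_abs.mp habs with h | h
    · exact Or.inl h.le
    · exact Or.inr (by simp only [Set.mem_setOf_eq]; linarith)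
  -- measure accounting
  have hB1 : MeasurableSet {ω | (K : ℝ) * ε ≤ S ω} := measurableSet_le measurable_const hSmeas
  have hB2 : MeasurableSet {ω | S ω ≤ -((K : ℝ) * ε)} := measurableSet_le hSmeas measurable_const
  have hcompl : (P Aᶜ).toReal ≤ 2 * Real.exp (-(2 * K * ε ^ 2)) := by
    have hle : P Aᶜ ≤ P {ω | (K : ℝ) * ε ≤ S ω} + P {ω | S ω ≤ -((K : ℝ) * ε)} :=
      le_trans (measure_mono hsub) (measure_union_le _ _)
    have h2 : (P Aᶜ).toReal ≤ (P {ω | (K : ℝ) * ε ≤ S ω}).toReal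
        + (P {ω | S ω ≤ -((K : ℝ) * ε)}).toReal := by
      rw [← ENNReal.toReal_add (measure_ne_top P _) (measure_ne_top P _)]
      exact ENNReal.toReal_mono (by finiteness) hle
    linarith [hup, hdown]
  have hsum1 : (P A).toReal + (P Aᶜ).toReal = 1 := by
    rw [← ENNReal.toReal_add (measure_ne_top P A) (measure_ne_top P Aᶜ),
      measure_add_measure_compl hAmeas]
    simp
  have h2ν : (2:ℝ) * (1 / (2 * ν)) = 1 / ν := by field_simp
  have : 2 * Real.exp (-(2 * K * ε ^ 2)) ≤ 1 / ν := by
    calc 2 * Real.exp (-(2 * K * ε ^ 2)) ≤ 2 * (1 / (2 * ν)) := by linarith [hexp_le]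
    _ = 1 / ν := h2ν
  show (P A).toReal ≥ 1 - 1 / ν
  linarith
end

section
/- For every real number γ, the quantity δ(γ) = g(γ)·(g(γ) − γ), where g(γ) = φ(γ)/(1 − Φ(γ)) with φ and Φ the standard normal density and cumulative distribution function, satisfies 0 < δ(γ) < 1. In particular g(γ) > γ and g(γ) > 0 for all γ ∈ ℝ. -/
open MeasureTheory ProbabilityTheory

open Real Filter Set

/-- The standard normal probability density function `φ`. -/
noncomputable def stdNormalPDF (x : ℝ) : ℝ := gaussianPDFReal 0 1 x

lemma phi_def (x : ℝ) : stdNormalPDF x = (Real.sqrt (2 * Real.pi))⁻¹ * Real.exp (-x ^ 2 / 2) := by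
  simp [stdNormalPDF, gaussianPDFReal]

lemma phi_pos (x : ℝ) : 0 < stdNormalPDF x := gaussianPDFReal_pos 0 1 x one_ne_zero

lemma phi_cont : Continuous stdNormalPDF := by
  simp only [funext phi_def]
  continuity

lemma phi_integrable : Integrable stdNormalPDF := integrable_gaussianPDFReal 0 1

lemma phi_deriv (x : ℝ) : HasDerivAt stdNormalPDF (-x * stdNormalPDF x) x := by
  have h1 : HasDerivAt (fun y : ℝ => -y ^ 2 / 2) (-x) x := by
    have := (hasDerivAt_pow 2 x).neg.div_const 2; simpa using this.congr_deriv (by push_cast; ring)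
  have h2 := (h1.exp).const_mul ((Real.sqrt (2 * Real.pi))⁻¹)
  have : HasDerivAt (fun y => (Real.sqrt (2 * Real.pi))⁻¹ * Real.exp (-y ^ 2 / 2))
      (-x * stdNormalPDF x) x := by
    refine h2.congr_deriv ?_
    rw [phi_def]; ring
  exact this.congr_of_eventuallyEq (by filter_upwards with y using (phi_def y))

/-- The standard normal cumulative distribution function `Φ`. -/
noncomputable def stdNormalCDF (x : ℝ) : ℝ := ((gaussianReal 0 1) (Set.Iic x)).toReal

noncomputable def QQ (x : ℝ) : ℝ := ∫ t in Set.Ioi x, stdNormalPDF t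

lemma Iic_add_Ioi (x : ℝ) : (∫ t in Set.Iic x, stdNormalPDF t) + QQ x = 1 := by
  rw [QQ, intervalIntegral.integral_Iic_add_Ioi phi_integrable.integrableOn phi_integrable.integrableOn]
  exact integral_gaussianPDFReal_eq_one 0 one_ne_zero

lemma cdf_eq (x : ℝ) : stdNormalCDF x = ∫ t in Set.Iic x, stdNormalPDF t := by
  rw [stdNormalCDF, gaussianReal_of_var_ne_zero 0 one_ne_zero,
    withDensity_apply _ measurableSet_Iic]
  have : ∀ a : ℝ, ENNReal.ofReal (gaussianPDFReal 0 1 a) = ENNReal.ofReal (stdNormalPDF a) :=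
    fun a => rfl
  simp only [gaussianPDF_def, this]
  rw [← ofReal_integral_eq_lintegral_ofReal phi_integrable.integrableOn
    (ae_of_all _ fun t => (phi_pos t).le)]
  exact ENNReal.toReal_ofReal (integral_nonneg fun t => (phi_pos t).le)

lemma one_sub_cdf (x : ℝ) : 1 - stdNormalCDF x = QQ x := by
  have := Iic_add_Ioi x
  rw [cdf_eq]; linarith

lemma QQ_deriv (x : ℝ) : HasDerivAt QQ (-(stdNormalPDF x)) x := by
  have heq : ∀ y : ℝ, QQ y = QQ 0 - ∫ t in (0:ℝ)..y, stdNormalPDF t := by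
    intro y
    have h := intervalIntegral.integral_Iic_sub_Iic (μ := volume) (f := stdNormalPDF)
      phi_integrable.integrableOn phi_integrable.integrableOn (a := 0) (b := y)
    have h1 := Iic_add_Ioi y
    have h2 := Iic_add_Ioi 0
    linarith
  have hd : HasDerivAt (fun y => ∫ t in (0:ℝ)..y, stdNormalPDF t) (stdNormalPDF x) x :=
    phi_cont.integral_hasStrictDerivAt 0 x |>.hasDerivAt
  have : HasDerivAt (fun y => QQ 0 - ∫ t in (0:ℝ)..y, stdNormalPDF t) (-(stdNormalPDF x)) x := by
    simpa using (hd.const_sub (QQ 0))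
  exact this.congr_of_eventuallyEq (by filter_upwards with y using (heq y))

lemma phi_tendsto : Tendsto stdNormalPDF atTop (nhds 0) := by
  have h : Tendsto (fun x : ℝ => -x ^ 2 / 2) atTop atBot := by
    apply Tendsto.atBot_div_const two_pos
    exact tendsto_neg_atBot_iff.mpr (tendsto_pow_atTop two_ne_zero)
  have := (Real.tendsto_exp_atBot.comp h).const_mul ((Real.sqrt (2 * Real.pi))⁻¹)
  simp only [mul_zero] at this
  exact this.congr' (by filter_upwards with y using (phi_def y).symm)

lemma xphi_tendsto : Tendsto (fun x => x * stdNormalPDF x) atTop (nhds 0) := by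
  have hup : Tendsto (fun x : ℝ => (Real.sqrt (2 * Real.pi))⁻¹ * Real.exp (x - x ^ 2 / 2))
      atTop (nhds 0) := by
    have h : Tendsto (fun x : ℝ => x - x ^ 2 / 2) atTop atBot := by
      have : (fun x : ℝ => x - x ^ 2 / 2) = fun x : ℝ => x * (1 - x / 2) := by
        funext x; ring
      rw [this]
      exact Tendsto.atTop_mul_atBot₀ tendsto_id
        (tendsto_atBot_add_const_left _ 1 (tendsto_neg_atBot_iff.mpr
          (tendsto_id.atTop_div_const two_pos)))
    have := (Real.tendsto_exp_atBot.comp h).const_mul ((Real.sqrt (2 * Real.pi))⁻¹)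
    simpa using this
  apply tendsto_of_tendsto_of_tendsto_of_le_of_le' tendsto_const_nhds hup
  · filter_upwards [eventually_ge_atTop (0:ℝ)] with x hx
    exact mul_nonneg hx (phi_pos x).le
  · filter_upwards [eventually_ge_atTop (0:ℝ)] with x hx
    rw [phi_def]
    have hxe : x ≤ Real.exp x := (Real.add_one_le_exp x).trans' (by linarith)
    have : x * ((Real.sqrt (2 * Real.pi))⁻¹ * Real.exp (-x ^ 2 / 2))
        ≤ Real.exp x * ((Real.sqrt (2 * Real.pi))⁻¹ * Real.exp (-x ^ 2 / 2)) := by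
      apply mul_le_mul_of_nonneg_right hxe
      positivity
    calc x * ((Real.sqrt (2 * Real.pi))⁻¹ * Real.exp (-x ^ 2 / 2))
        ≤ Real.exp x * ((Real.sqrt (2 * Real.pi))⁻¹ * Real.exp (-x ^ 2 / 2)) := this
      _ = (Real.sqrt (2 * Real.pi))⁻¹ * Real.exp (x - x ^ 2 / 2) := by
          rw [sub_eq_add_neg, Real.exp_add, ← neg_div]; ring

lemma QQ_tendsto : Tendsto QQ atTop (nhds 0) := by
  have h : Tendsto (fun y => ∫ t in (0:ℝ)..y, stdNormalPDF t) atTop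
      (nhds (∫ t in Set.Ioi (0:ℝ), stdNormalPDF t)) :=
    intervalIntegral_tendsto_integral_Ioi 0 phi_integrable.integrableOn tendsto_id
  have heq : ∀ y : ℝ, QQ y = QQ 0 - ∫ t in (0:ℝ)..y, stdNormalPDF t := by
    intro y
    have h := intervalIntegral.integral_Iic_sub_Iic (μ := volume) (f := stdNormalPDF)
      phi_integrable.integrableOn phi_integrable.integrableOn (a := 0) (b := y)
    have h1 := Iic_add_Ioi y
    have h2 := Iic_add_Ioi 0
    linarith
  have := (h.const_sub (QQ 0))
  have h0 : QQ 0 - ∫ t in Set.Ioi (0:ℝ), stdNormalPDF t = 0 := by simp [QQ]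
  rw [h0] at this
  exact this.congr' (by filter_upwards with y using (heq y).symm)

/-- Strictly decreasing with limit zero implies positive. -/
lemma pos_of_deriv_neg_tendsto (f f' : ℝ → ℝ) (hd : ∀ x, HasDerivAt f (f' x) x)
    (hneg : ∀ x, f' x < 0) (hlim : Tendsto f atTop (nhds 0)) (x : ℝ) : 0 < f x := by
  have hanti : StrictAnti f := by
    apply strictAnti_of_deriv_neg
    intro y; rw [(hd y).deriv]; exact hneg y
  have hnn : ∀ y : ℝ, 0 ≤ f y := by
    intro y
    refine le_of_tendsto hlim ?_
    filter_upwards [eventually_ge_atTop y] with z hz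
    exact hanti.antitone hz
  calc 0 ≤ f (x + 1) := hnn _
    _ < f x := hanti (by linarith)

lemma QQ_pos (x : ℝ) : 0 < QQ x :=
  pos_of_deriv_neg_tendsto QQ (fun y => -(stdNormalPDF y)) QQ_deriv
    (fun y => neg_neg_iff_pos.mpr (phi_pos y)) QQ_tendsto x

lemma neg_phi_deriv (t : ℝ) : HasDerivAt (fun y => -(stdNormalPDF y)) (t * stdNormalPDF t) t := by
  exact (phi_deriv t).neg.congr_deriv (by ring)

lemma tphi_integrableOn {x : ℝ} (hx : 0 ≤ x) :
    IntegrableOn (fun t => t * stdNormalPDF t) (Set.Ioi x) := by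
  apply integrableOn_Ioi_deriv_of_nonneg' (g := fun y => -(stdNormalPDF y))
    (fun t _ => neg_phi_deriv t)
  · intro t ht
    exact mul_nonneg (le_trans hx ht.le) (phi_pos t).le
  · simpa using phi_tendsto.neg

lemma tphi_integral {x : ℝ} (hx : 0 ≤ x) :
    ∫ t in Set.Ioi x, t * stdNormalPDF t = stdNormalPDF x := by
  have := integral_Ioi_of_hasDerivAt_of_nonneg' (g := fun y => -(stdNormalPDF y))
    (g' := fun t => t * stdNormalPDF t) (fun t _ => neg_phi_deriv t)
    (fun t ht => mul_nonneg (le_trans hx ht.le) (phi_pos t).le) (by simpa using phi_tendsto.neg)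
  simpa using this

lemma xQQ_le_phi {x : ℝ} (hx : 0 ≤ x) : x * QQ x ≤ stdNormalPDF x := by
  rw [← tphi_integral hx, QQ, ← integral_const_mul]
  apply setIntegral_mono_on (phi_integrable.integrableOn.const_mul x) (tphi_integrableOn hx)
    measurableSet_Ioi
  intro t ht
  exact mul_le_mul_of_nonneg_right ht.le (phi_pos t).le

lemma xQQ_tendsto : Tendsto (fun x => x * QQ x) atTop (nhds 0) := by
  apply tendsto_of_tendsto_of_tendsto_of_le_of_le' tendsto_const_nhds phi_tendsto
  · filter_upwards [eventually_ge_atTop (0:ℝ)] with x hx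
    exact mul_nonneg hx (QQ_pos x).le
  · filter_upwards [eventually_ge_atTop (0:ℝ)] with x hx
    exact xQQ_le_phi hx

/-- `C x = φ x - x * Q x` is positive: `g > γ`. -/
lemma C_pos (x : ℝ) : 0 < stdNormalPDF x - x * QQ x := by
  apply pos_of_deriv_neg_tendsto (fun y => stdNormalPDF y - y * QQ y) (fun y => -(QQ y))
  · intro y
    have h2 := (hasDerivAt_id y).mul (QQ_deriv y)
    have h := (phi_deriv y).sub h2
    refine h.congr_deriv ?_
    simp only [id_eq]; ring
  · intro y; simpa using QQ_pos y
  · simpa using phi_tendsto.sub xQQ_tendsto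

/-- `B x = Q x - x * φ x / (1 + x²)` is positive: lower Mills bound. -/
lemma B_pos (x : ℝ) : 0 < QQ x - x * stdNormalPDF x / (1 + x ^ 2) := by
  apply pos_of_deriv_neg_tendsto (fun y => QQ y - y * stdNormalPDF y / (1 + y ^ 2))
    (fun y => -2 * stdNormalPDF y / (1 + y ^ 2) ^ 2)
  · intro y
    have hden : (1 : ℝ) + y ^ 2 ≠ 0 := by positivity
    have h1 : HasDerivAt (fun z : ℝ => z * stdNormalPDF z)
        (stdNormalPDF y + y * (-y * stdNormalPDF y)) y := by
      have := (hasDerivAt_id y).mul (phi_deriv y)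
      refine this.congr_deriv ?_
      simp only [id_eq]; ring
    have h2 : HasDerivAt (fun z : ℝ => 1 + z ^ 2) (2 * y) y := by
      simpa using ((hasDerivAt_pow 2 y).const_add 1)
    have h4 := (QQ_deriv y).sub (h1.div h2 hden)
    refine h4.congr_deriv ?_
    field_simp
    ring
  · intro y
    have : (0:ℝ) < stdNormalPDF y := phi_pos y
    have hden : (0:ℝ) < (1 + y ^ 2) ^ 2 := by positivity
    apply div_neg_of_neg_of_pos (by linarith) hden
  · have h1 : Tendsto (fun x : ℝ => (1 + x ^ 2)⁻¹) atTop (nhds 0) := by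
      apply Tendsto.inv_tendsto_atTop
      apply tendsto_atTop_add_const_left
      exact tendsto_pow_atTop two_ne_zero
    have := QQ_tendsto.sub ((xphi_tendsto.mul h1))
    simpa [div_eq_mul_inv, mul_assoc] using this

/-- `A x = Q² + x·Q·φ - φ²` is positive: `δ < 1`. -/
lemma A_pos (x : ℝ) :
    0 < QQ x ^ 2 + x * QQ x * stdNormalPDF x - stdNormalPDF x ^ 2 := by
  apply pos_of_deriv_neg_tendsto
    (fun y => QQ y ^ 2 + y * QQ y * stdNormalPDF y - stdNormalPDF y ^ 2)
    (fun y => stdNormalPDF y * (y * stdNormalPDF y - (1 + y ^ 2) * QQ y))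
  · intro y
    have h1 := (QQ_deriv y).pow 2
    have h2 := (((hasDerivAt_id y).mul (QQ_deriv y)).mul (phi_deriv y))
    have h3 := (phi_deriv y).pow 2
    have h := (h1.add h2).sub h3
    refine h.congr_deriv ?_
    simp only [id_eq, Pi.mul_apply]; ring
  · intro y
    have hφ := phi_pos y
    have hB := B_pos y
    have hden : (0:ℝ) < 1 + y ^ 2 := by positivity
    apply mul_neg_of_pos_of_neg hφ
    rw [sub_pos, div_lt_iff₀ hden] at hB
    nlinarith [hB]
  · have h1 : Tendsto (fun y => QQ y ^ 2) atTop (nhds 0) := by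
      simpa [pow_two] using QQ_tendsto.mul QQ_tendsto
    have h2 : Tendsto (fun y => y * QQ y * stdNormalPDF y) atTop (nhds 0) := by
      simpa using xQQ_tendsto.mul phi_tendsto
    have h3 : Tendsto (fun y => stdNormalPDF y ^ 2) atTop (nhds 0) := by
      simpa [pow_two] using phi_tendsto.mul phi_tendsto
    simpa [pow_two] using (h1.add h2).sub h3

/-- The hazard (inverse Mills ratio) function `g(γ) = φ(γ) / (1 - Φ(γ))`. -/
noncomputable def invMillsRatio (x : ℝ) : ℝ := stdNormalPDF x / (1 - stdNormalCDF x)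

/-- `δ(γ) = g(γ)·(g(γ) - γ)`. -/
noncomputable def millsDelta (x : ℝ) : ℝ := invMillsRatio x * (invMillsRatio x - x)

/-- For every real `γ`, `0 < δ(γ) < 1`; in particular `g(γ) > γ` and `g(γ) > 0`. -/
theorem stmt_5 (γ : ℝ) :
    0 < millsDelta γ ∧ millsDelta γ < 1 ∧ γ < invMillsRatio γ ∧ 0 < invMillsRatio γ := by
  have hg : invMillsRatio γ = stdNormalPDF γ / QQ γ := by
    rw [invMillsRatio, one_sub_cdf]
  have hq : 0 < QQ γ := QQ_pos γ
  have hp : 0 < stdNormalPDF γ := phi_pos γ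
  have hC := C_pos γ
  have hA := A_pos γ
  have hgγ : γ < invMillsRatio γ := by
    rw [hg, lt_div_iff₀ hq]
    linarith
  have hg0 : 0 < invMillsRatio γ := by
    rw [hg]; positivity
  refine ⟨?_, ?_, hgγ, hg0⟩
  · exact mul_pos hg0 (by linarith)
  · rw [millsDelta, hg]
    have h1 : stdNormalPDF γ / QQ γ * (stdNormalPDF γ / QQ γ - γ)
        = (stdNormalPDF γ * (stdNormalPDF γ - γ * QQ γ)) / (QQ γ * QQ γ) := by
      field_simp
    rw [h1, div_lt_one (by positivity)]
    nlinarith [hA]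
end

section
/- Let m₀ > 0, t > 0, and 0 ≤ p < 1 be real numbers. Let T be a random variable uniformly distributed on the interval [0, t], and define the random variable D = ((t + m₀)/(T + m₀))^{1−p}. Then the law of D is absolutely continuous with respect to Lebesgue measure, with density x ↦ ((t + m₀)/(t·(1 − p)))·x^{−(2−p)/(1−p)} on the interval [1, ((t + m₀)/m₀)^{1−p}] and 0 outside this interval. Equivalently, for 1 < D₀ < ((t + m₀)/m₀)^{1−p}, the derivative of D₀ ↦ P(D ≤ D₀) equals ((t + m₀)/(t·(1 − p)))·D₀^{−(2−p)/(1−p)}. -/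
open MeasureTheory ProbabilityTheory

namespace Stmt9Aux

open Set

lemma meas_f (m0 t p : ℝ) (hp1 : p < 1) :
    Measurable (fun τ : ℝ => ((t + m0) / (τ + m0)) ^ (1 - p)) :=
  (Real.continuous_rpow_const (by linarith)).measurable.comp
    (measurable_const.div (measurable_id.add_const m0))

lemma preimage_eq (m0 t p : ℝ) (hm0 : 0 < m0) (ht : 0 < t) (hp1 : p < 1)
    {y : ℝ} (hy : 1 ≤ y) :
    Icc 0 t ∩ (fun τ : ℝ => ((t + m0) / (τ + m0)) ^ (1 - p)) ⁻¹' Iic y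
      = Icc (max 0 ((t + m0) * y ^ (-(1 - p)⁻¹) - m0)) t := by
  have h1p : 0 < 1 - p := by linarith
  have htm : 0 < t + m0 := by linarith
  have hy0 : 0 < y := lt_of_lt_of_le one_pos hy
  ext τ
  simp only [mem_inter_iff, mem_Icc, mem_preimage, mem_Iic, max_le_iff]
  constructor
  · rintro ⟨⟨h0, hτt⟩, hf⟩
    have hτm : 0 < τ + m0 := by linarith
    refine ⟨⟨by linarith, ?_⟩, hτt⟩
    -- from hf deduce (t+m0) * y^(-(1-p)⁻¹) - m0 ≤ τ
    have h1 : (t + m0) / (τ + m0) ≤ y ^ (1 - p)⁻¹ :=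
      (Real.le_rpow_inv_iff_of_pos (div_nonneg htm.le hτm.le) hy0.le h1p).2 hf
    have h2 : t + m0 ≤ y ^ (1 - p)⁻¹ * (τ + m0) := (div_le_iff₀ hτm).1 h1
    have h3 : (t + m0) * y ^ (-(1 - p)⁻¹) ≤ τ + m0 := by
      rw [Real.rpow_neg hy0.le, ← div_eq_mul_inv,
        div_le_iff₀ (Real.rpow_pos_of_pos hy0 _)]
      linarith [h2, mul_comm (y ^ (1 - p)⁻¹) (τ + m0)]
    linarith
  · rintro ⟨⟨h0, hg⟩, hτt⟩
    have hτm : 0 < τ + m0 := by linarith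
    refine ⟨⟨h0, hτt⟩, ?_⟩
    have h3 : (t + m0) * y ^ (-(1 - p)⁻¹) ≤ τ + m0 := by linarith
    have h2 : t + m0 ≤ y ^ (1 - p)⁻¹ * (τ + m0) := by
      rw [Real.rpow_neg hy0.le, ← div_eq_mul_inv,
        div_le_iff₀ (Real.rpow_pos_of_pos hy0 _)] at h3
      linarith [h3, mul_comm (τ + m0) (y ^ (1 - p)⁻¹)]
    have h1 : (t + m0) / (τ + m0) ≤ y ^ (1 - p)⁻¹ := (div_le_iff₀ hτm).2 (by linarith [mul_comm (y ^ (1 - p)⁻¹) (τ + m0)])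
    exact (Real.le_rpow_inv_iff_of_pos (div_nonneg htm.le hτm.le) hy0.le h1p).1 h1

end Stmt9Aux

namespace Stmt9Aux2
open Stmt9Aux Set

lemma map_Iic (m0 t p : ℝ) (hm0 : 0 < m0) (ht : 0 < t) (hp0 : 0 ≤ p) (hp1 : p < 1) (y : ℝ) :
    Measure.map (fun τ : ℝ => ((t + m0) / (τ + m0)) ^ (1 - p))
        ((volume : Measure ℝ)[|Icc 0 t]) (Iic y)
      = ENNReal.ofReal ((t + m0) / t *
          (1 - (max 1 (min (((t + m0) / m0) ^ (1 - p)) y)) ^ (-(1 - p)⁻¹))) := by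
  have h1p : 0 < 1 - p := by linarith
  have htm : 0 < t + m0 := by linarith
  have hM1 : 1 < ((t + m0) / m0) ^ (1 - p) := by
    rw [Real.one_lt_rpow_iff_of_pos (div_pos htm hm0)]
    exact Or.inl ⟨(one_lt_div hm0).2 (by linarith), h1p⟩
  have hMβ : (((t + m0) / m0) ^ (1 - p)) ^ (-(1 - p)⁻¹) = m0 / (t + m0) := by
    rw [← Real.rpow_mul (div_pos htm hm0).le, mul_neg, mul_inv_cancel₀ h1p.ne',
      Real.rpow_neg_one, inv_div]
  rw [Measure.map_apply (Stmt9Aux.meas_f m0 t p hp1) measurableSet_Iic,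
    cond_apply measurableSet_Icc, Real.volume_Icc, sub_zero]
  rcases lt_or_ge y 1 with hy | hy
  · -- empty preimage
    have hempty : Icc 0 t ∩ (fun τ : ℝ => ((t + m0) / (τ + m0)) ^ (1 - p)) ⁻¹' Iic y = ∅ := by
      ext τ
      simp only [mem_inter_iff, mem_Icc, mem_preimage, mem_Iic, mem_empty_iff_false, iff_false,
        not_and, and_imp]
      intro h0 hτt hle
      have hτm : 0 < τ + m0 := by linarith
      have : (1 : ℝ) ≤ ((t + m0) / (τ + m0)) ^ (1 - p) :=
        Real.one_le_rpow ((one_le_div hτm).2 (by linarith)) h1p.le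
      linarith
    rw [hempty]
    have hz : max 1 (min (((t + m0) / m0) ^ (1 - p)) y) = 1 := by
      rw [min_eq_right (le_of_lt (lt_trans hy hM1)), max_eq_left hy.le]
    rw [hz, Real.one_rpow]
    simp
  · rw [preimage_eq m0 t p hm0 ht hp1 hy, Real.volume_Icc,
      ← ENNReal.ofReal_inv_of_pos ht, ← ENNReal.ofReal_mul (inv_nonneg.2 ht.le)]
    have hzmax : max 1 (min (((t + m0) / m0) ^ (1 - p)) y)
        = min (((t + m0) / m0) ^ (1 - p)) y := by
      rw [max_eq_right (le_min hM1.le hy)]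
    rw [hzmax]
    congr 1
    have hy0 : (0 : ℝ) < y := lt_of_lt_of_le one_pos hy
    rcases le_total y (((t + m0) / m0) ^ (1 - p)) with hyM | hyM
    · rw [min_eq_right hyM]
      have hg0 : 0 ≤ (t + m0) * y ^ (-(1 - p)⁻¹) - m0 := by
        have h1 : m0 / (t + m0) ≤ y ^ (-(1 - p)⁻¹) := by
          rw [← hMβ]
          exact Real.rpow_le_rpow_of_nonpos hy0 hyM (neg_nonpos.2 (by positivity))
        have := (div_le_iff₀ htm).1 h1
        nlinarith
      rw [max_eq_right hg0]
      set u := y ^ (-(1 - p)⁻¹)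
      field_simp
      ring
    · rw [min_eq_left hyM, hMβ]
      have hgle : (t + m0) * y ^ (-(1 - p)⁻¹) - m0 ≤ 0 := by
        have h1 : y ^ (-(1 - p)⁻¹) ≤ m0 / (t + m0) := by
          rw [← hMβ]
          exact Real.rpow_le_rpow_of_nonpos (lt_trans one_pos hM1) hyM (neg_nonpos.2 (by positivity))
        have := (le_div_iff₀ htm).1 h1
        nlinarith
      rw [max_eq_left hgle, sub_zero]
      field_simp
      ring

end Stmt9Aux2

namespace Stmt9Aux3
open Stmt9Aux Set

lemma wd_Iic (m0 t p : ℝ) (hm0 : 0 < m0) (ht : 0 < t) (hp0 : 0 ≤ p) (hp1 : p < 1) (y : ℝ) :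
    volume.withDensity (fun x => ENNReal.ofReal
        (Set.indicator (Icc 1 (((t + m0) / m0) ^ (1 - p)))
          (fun z => (t + m0) / (t * (1 - p)) * z ^ (-((2 - p) / (1 - p)))) x)) (Iic y)
      = ENNReal.ofReal ((t + m0) / t *
          (1 - (max 1 (min (((t + m0) / m0) ^ (1 - p)) y)) ^ (-(1 - p)⁻¹))) := by
  have h1p : 0 < 1 - p := by linarith
  have htm : 0 < t + m0 := by linarith
  have hM1 : 1 < ((t + m0) / m0) ^ (1 - p) := by
    rw [Real.one_lt_rpow_iff_of_pos (div_pos htm hm0)]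
    exact Or.inl ⟨(one_lt_div hm0).2 (by linarith), h1p⟩
  set M := ((t + m0) / m0) ^ (1 - p) with hMdef
  have hexp : -((2 - p) / (1 - p)) + 1 = -(1 - p)⁻¹ := by
    field_simp
    ring
  rw [withDensity_apply _ measurableSet_Iic]
  have hind : (fun x => ENNReal.ofReal
      (Set.indicator (Icc 1 M) (fun z => (t + m0) / (t * (1 - p)) * z ^ (-((2 - p) / (1 - p)))) x))
      = Set.indicator (Icc 1 M)
        (fun z => ENNReal.ofReal ((t + m0) / (t * (1 - p)) * z ^ (-((2 - p) / (1 - p))))) := by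
    funext x
    by_cases h : x ∈ Icc 1 M <;> simp [h]
  rw [hind, lintegral_indicator measurableSet_Icc, Measure.restrict_restrict measurableSet_Icc]
  rcases lt_or_ge y 1 with hy | hy
  · have hempty : Icc 1 M ∩ Iic y = ∅ := by
      ext x
      simp only [mem_inter_iff, mem_Icc, mem_Iic, mem_empty_iff_false, iff_false, not_and, and_imp]
      intro h1 _ 
      linarith
    rw [hempty, Measure.restrict_empty, lintegral_zero_measure]
    have hz : max 1 (min M y) = 1 := by
      rw [min_eq_right (le_of_lt (lt_trans hy hM1)), max_eq_left hy.le]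
    rw [hz, Real.one_rpow]
    simp
  · have hzmax : max 1 (min M y) = min M y := by rw [max_eq_right (le_min hM1.le hy)]
    rw [hzmax]
    set Y := min M y with hYdef
    have hY1 : 1 ≤ Y := le_min hM1.le hy
    have hY0 : 0 < Y := lt_of_lt_of_le one_pos hY1
    have hset : Icc 1 M ∩ Iic y = Icc 1 Y := by
      ext x
      simp only [mem_inter_iff, mem_Icc, mem_Iic, hYdef, le_min_iff]
      tauto
    rw [hset]
    -- continuous on Icc 1 Y, integrable
    have hcont : ContinuousOn (fun z : ℝ => (t + m0) / (t * (1 - p)) * z ^ (-((2 - p) / (1 - p))))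
        (Icc 1 Y) :=
      continuousOn_const.mul (ContinuousOn.rpow_const continuousOn_id
        (fun x hx => Or.inl (by rintro rfl; exact absurd hx.1 (by norm_num))))
    have hint : IntegrableOn (fun z : ℝ => (t + m0) / (t * (1 - p)) * z ^ (-((2 - p) / (1 - p))))
        (Icc 1 Y) volume := hcont.integrableOn_Icc
    have hnn : 0 ≤ᵐ[volume.restrict (Icc 1 Y)]
        (fun z : ℝ => (t + m0) / (t * (1 - p)) * z ^ (-((2 - p) / (1 - p)))) := by
      refine (ae_restrict_iff' measurableSet_Icc).2 (ae_of_all _ fun x hx => ?_)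
      have hx0 : (0:ℝ) ≤ x := le_trans zero_le_one hx.1
      have : (0:ℝ) ≤ (t + m0) / (t * (1 - p)) := by positivity
      exact mul_nonneg this (Real.rpow_nonneg hx0 _)
    rw [← ofReal_integral_eq_lintegral_ofReal hint hnn]
    congr 1
    rw [integral_Icc_eq_integral_Ioc, ← intervalIntegral.integral_of_le hY1,
      intervalIntegral.integral_const_mul,
      integral_rpow (Or.inr ⟨by
        intro h
        have : (2 - p) / (1 - p) = 1 := by
          have := neg_injective h
          linarith [this]
        rw [div_eq_one_iff_eq h1p.ne'] at this
        linarith, by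
        rw [Set.uIcc_of_le hY1]
        intro h
        exact absurd h.1 (by norm_num)⟩)]
    rw [hexp, Real.one_rpow]
    set u := Y ^ (-(1 - p)⁻¹)
    have h2 : -(1-p)⁻¹ ≠ 0 := by
      simp [h1p.ne']
    field_simp
    ring
end Stmt9Aux3

/-- Power-law density of the mean-field degree of an attribute node: if `T` is
uniform on `[0, t]` and `D = ((t + m₀)/(T + m₀))^(1-p)`, then the law of `D` is
absolutely continuous with density `x ↦ ((t + m₀)/(t·(1-p)))·x^(-(2-p)/(1-p))` on
`[1, ((t + m₀)/m₀)^(1-p)]` and `0` outside; equivalently, for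
`1 < D₀ < ((t + m₀)/m₀)^(1-p)` the derivative of `D₀ ↦ P(D ≤ D₀)` equals
`((t + m₀)/(t·(1-p)))·D₀^(-(2-p)/(1-p))`. -/
theorem stmt_9 (m0 t p : ℝ) (hm0 : 0 < m0) (ht : 0 < t) (hp0 : 0 ≤ p) (hp1 : p < 1) :
    Measure.map (fun τ => ((t + m0) / (τ + m0)) ^ (1 - p))
        ((volume : Measure ℝ)[|Set.Icc 0 t])
      = volume.withDensity (fun x => ENNReal.ofReal
          (Set.indicator (Set.Icc 1 (((t + m0) / m0) ^ (1 - p)))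
            (fun y => (t + m0) / (t * (1 - p)) * y ^ (-((2 - p) / (1 - p)))) x))
    ∧ ∀ D0 : ℝ, 1 < D0 → D0 < ((t + m0) / m0) ^ (1 - p) →
        HasDerivAt (fun y =>
            ((Measure.map (fun τ => ((t + m0) / (τ + m0)) ^ (1 - p))
              ((volume : Measure ℝ)[|Set.Icc 0 t])) (Set.Iic y)).toReal)
          ((t + m0) / (t * (1 - p)) * D0 ^ (-((2 - p) / (1 - p)))) D0 := by
  have h1p : 0 < 1 - p := by linarith
  have htm : 0 < t + m0 := by linarith
  haveI hprob : IsProbabilityMeasure ((volume : Measure ℝ)[|Set.Icc 0 t]) := by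
    apply cond_isProbabilityMeasure_of_finite
    · rw [Real.volume_Icc, sub_zero]
      simpa using ht
    · rw [Real.volume_Icc]
      exact ENNReal.ofReal_ne_top
  haveI hprob2 : IsProbabilityMeasure (Measure.map
      (fun τ : ℝ => ((t + m0) / (τ + m0)) ^ (1 - p)) ((volume : Measure ℝ)[|Set.Icc 0 t])) :=
    Measure.isProbabilityMeasure_map (Stmt9Aux.meas_f m0 t p hp1).aemeasurable
  constructor
  · refine Measure.ext_of_Iic _ _ (fun y => ?_)
    rw [Stmt9Aux2.map_Iic m0 t p hm0 ht hp0 hp1 y, Stmt9Aux3.wd_Iic m0 t p hm0 ht hp0 hp1 y]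
  · intro D0 hD1 hDM
    have hD0 : (0:ℝ) < D0 := lt_trans one_pos hD1
    -- explicit derivative
    have h1 : HasDerivAt (fun y : ℝ => y ^ (-(1 - p)⁻¹))
        ((-(1 - p)⁻¹) * D0 ^ (-(1 - p)⁻¹ - 1)) D0 :=
      Real.hasDerivAt_rpow_const (Or.inl hD0.ne')
    have h3 : HasDerivAt (fun y : ℝ => (t + m0) / t * (1 - y ^ (-(1 - p)⁻¹)))
        ((t + m0) / t * -((-(1 - p)⁻¹) * D0 ^ (-(1 - p)⁻¹ - 1))) D0 :=
      (h1.const_sub 1).const_mul _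
    have hval : (t + m0) / t * -((-(1 - p)⁻¹) * D0 ^ (-(1 - p)⁻¹ - 1))
        = (t + m0) / (t * (1 - p)) * D0 ^ (-((2 - p) / (1 - p))) := by
      have hexp : -(1 - p)⁻¹ - 1 = -((2 - p) / (1 - p)) := by
        field_simp
        ring
      rw [hexp]
      set u := D0 ^ (-((2 - p) / (1 - p)))
      field_simp
    rw [hval] at h3
    refine h3.congr_of_eventuallyEq ?_
    refine Filter.eventuallyEq_of_mem (Ioo_mem_nhds hD1 hDM) (fun y hy => ?_)
    rw [Stmt9Aux2.map_Iic m0 t p hm0 ht hp0 hp1 y,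
      min_eq_right hy.2.le, max_eq_right hy.1.le, ENNReal.toReal_ofReal]
    have hy0 : (0:ℝ) < y := lt_trans one_pos hy.1
    have : y ^ (-(1 - p)⁻¹) ≤ 1 :=
      Real.rpow_le_one_of_one_le_of_nonpos hy.1.le (neg_nonpos.2 (by positivity))
    have h4 : (0:ℝ) ≤ (t + m0) / t := by positivity
    exact mul_nonneg h4 (by linarith)
end
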